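/- For every h > 0 and every u ∈ C²([a, b]; ℂ) with u(a) = u(b) = 0, the following weighted energy identity holds: ∫_a^b |h (e^{Φ/h} u)'(s)|² ds + ∫_a^b (V(s) − (Φ'(s))²) e^{2Φ(s)/h} |u(s)|² ds = Re ∫_a^b (−h² u''(s) + V(s) u(s)) · e^{2Φ(s)/h} · conj(u(s)) ds, where Φ' denotes the almost-everywhere derivative of Φ. -/

import Mathlib

open MeasureTheory Real intervalIntegral

open Filter

/-- FTC for globally Lipschitz functions into ℂ. -/
theorem lipschitz_integral_deriv {F : ℝ → ℂ} {L : NNReal} (hF : LipschitzWith L F)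
    {a b : ℝ} (hab : a ≤ b) : ∫ x in a..b, deriv F x = F b - F a := by
  -- difference quotients
  set δ : ℕ → ℝ := fun n => 1 / (n + 1) with hδ
  have hδpos : ∀ n, 0 < δ n := fun n => Nat.one_div_pos_of_nat
  have hδ0 : Tendsto δ atTop (nhds 0) := tendsto_one_div_add_atTop_nhds_zero_nat
  set g : ℕ → ℝ → ℂ := fun n x => (δ n)⁻¹ • (F (x + δ n) - F x) with hg
  have hFc : Continuous F := hF.continuous
  -- each g n is continuous
  have hgc : ∀ n, Continuous (g n) := fun n => by
    show Continuous (fun x => (δ n)⁻¹ • (F (x + δ n) - F x))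
    fun_prop
  -- bound
  have hbd : ∀ n x, ‖g n x‖ ≤ L := by
    intro n x
    have h1 : ‖F (x + δ n) - F x‖ ≤ L * δ n := by
      have h2 := hF.dist_le_mul (x + δ n) x
      rw [dist_eq_norm] at h2
      simpa [Real.dist_eq, add_sub_cancel_left, abs_of_pos (hδpos n)] using h2
    rw [hg]
    simp only [norm_smul, norm_inv, Real.norm_eq_abs, abs_of_pos (hδpos n)]
    rw [inv_mul_le_iff₀ (hδpos n), mul_comm]
    exact h1
  -- a.e. convergence to deriv F
  have hae : ∀ᵐ x ∂(volume.restrict (Set.Ioc a b)),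
      Tendsto (fun n => g n x) atTop (nhds (deriv F x)) := by
    have := hF.ae_differentiableAt (μ := volume)
    have h2 : ∀ᵐ x : ℝ, Tendsto (fun n => g n x) atTop (nhds (deriv F x)) := by
      filter_upwards [this] with x hx
      have hd := hx.hasDerivAt
      rw [hasDerivAt_iff_tendsto_slope] at hd
      have hne : ∀ᶠ n in atTop, x + δ n ∈ ({x}ᶜ : Set ℝ) := by
        filter_upwards with n
        simp [ne_of_gt, (hδpos n)]
      have h3 : Tendsto (fun n => x + δ n) atTop (nhdsWithin x {x}ᶜ) := by
        apply tendsto_nhdsWithin_iff.2 ⟨?_, hne⟩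
        simpa using (tendsto_const_nhds.add hδ0)
      have := hd.comp h3
      convert this using 2 with n
      simp [hg, slope, vsub_eq_sub, add_sub_cancel_left]
    exact ae_restrict_of_ae h2
  -- dominated convergence on Ioc a b
  have hdom : Tendsto (fun n => ∫ x in Set.Ioc a b, g n x) atTop
      (nhds (∫ x in Set.Ioc a b, deriv F x)) := by
    exact MeasureTheory.tendsto_integral_of_dominated_convergence (fun _ => (L : ℝ))
      (fun n => (hgc n).aestronglyMeasurable)
      (integrable_const _) (fun n => Filter.Eventually.of_forall (fun x => hbd n x)) hae
  -- compute ∫ g n explicitly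
  have hint : ∀ n, ∫ x in a..b, g n x =
      (δ n)⁻¹ • ((∫ x in b..(b + δ n), F x) - ∫ x in a..(a + δ n), F x) := by
    intro n
    have hFi : ∀ c d : ℝ, IntervalIntegrable F volume c d := fun c d =>
      hFc.intervalIntegrable _ _
    rw [hg]
    simp only
    rw [intervalIntegral.integral_smul]
    congr 1
    have hFi' : IntervalIntegrable (fun x => F (x + δ n)) volume a b :=
      (hFc.comp (continuous_add_right (δ n))).intervalIntegrable _ _
    rw [intervalIntegral.integral_sub hFi' (hFi a b)]
    have : (∫ x in a..b, F (x + δ n)) = ∫ x in (a + δ n)..(b + δ n), F x :=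
      intervalIntegral.integral_comp_add_right F (δ n)
    rw [this]
    have h1 : (∫ x in (a + δ n)..(b + δ n), F x) =
        (∫ x in (a + δ n)..b, F x) + ∫ x in b..(b + δ n), F x :=
      (intervalIntegral.integral_add_adjacent_intervals (hFi _ _) (hFi _ _)).symm
    have h2 : (∫ x in a..b, F x) =
        (∫ x in a..(a + δ n), F x) + ∫ x in (a + δ n)..b, F x :=
      (intervalIntegral.integral_add_adjacent_intervals (hFi _ _) (hFi _ _)).symm
    rw [h1, h2]
    abel
  -- limit of the boundary terms
  have hbound : ∀ c : ℝ, Tendsto (fun n => (δ n)⁻¹ • (∫ x in c..(c + δ n), F x)) atTop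
      (nhds (F c)) := by
    intro c
    have hprim : HasDerivAt (fun x => ∫ t in c..x, F t) (F c) c := by
      exact intervalIntegral.integral_hasDerivAt_right (hFc.intervalIntegrable _ _)
        (hFc.stronglyMeasurableAtFilter _ _) hFc.continuousAt
    rw [hasDerivAt_iff_tendsto_slope] at hprim
    have h3 : Tendsto (fun n => c + δ n) atTop (nhdsWithin c {c}ᶜ) := by
      apply tendsto_nhdsWithin_iff.2 ⟨?_, ?_⟩
      · simpa using (tendsto_const_nhds.add hδ0)
      · filter_upwards with n; simp [ne_of_gt, (hδpos n)]
    have := hprim.comp h3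
    convert this using 2 with n
    simp [slope, vsub_eq_sub, intervalIntegral.integral_same, add_sub_cancel_left]
  have hlim2 : Tendsto (fun n => ∫ x in a..b, g n x) atTop (nhds (F b - F a)) := by
    simp_rw [hint]
    have := ((hbound b).sub (hbound a))
    convert this using 2 with n
    simp [smul_sub]
  -- put together
  have heq : ∀ n, (∫ x in a..b, g n x) = ∫ x in Set.Ioc a b, g n x := fun n =>
    intervalIntegral.integral_of_le hab
  rw [intervalIntegral.integral_of_le hab]
  simp_rw [heq] at hlim2
  exact tendsto_nhds_unique hdom hlim2

/-- Product of bounded Lipschitz functions is Lipschitz. -/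
theorem lip_mul_aux {f g : ℝ → ℂ}
    (hf : ∃ L : NNReal, LipschitzWith L f) (hg : ∃ L : NNReal, LipschitzWith L g)
    (hfb : ∃ M : ℝ, ∀ x, ‖f x‖ ≤ M) (hgb : ∃ M : ℝ, ∀ x, ‖g x‖ ≤ M) :
    ∃ L : NNReal, LipschitzWith L (fun x => f x * g x) := by
  obtain ⟨Lf, hf⟩ := hf; obtain ⟨Lg, hg⟩ := hg
  obtain ⟨Mf, hMf⟩ := hfb; obtain ⟨Mg, hMg⟩ := hgb
  refine ⟨(Mf * Lg + Lf * Mg).toNNReal, LipschitzWith.of_dist_le_mul fun x y => ?_⟩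
  have h1 : f x * g x - f y * g y = f x * (g x - g y) + (f x - f y) * g y := by ring
  rw [dist_eq_norm, h1]
  have hfnn : (0:ℝ) ≤ Mf := (norm_nonneg _).trans (hMf x)
  have h2 : ‖f x * (g x - g y) + (f x - f y) * g y‖
      ≤ Mf * (Lg * dist x y) + Lf * dist x y * Mg := by
    refine (norm_add_le _ _).trans (add_le_add ?_ ?_)
    · rw [norm_mul]
      exact mul_le_mul (hMf x) (by rw [← dist_eq_norm]; exact hg.dist_le_mul x y)
        (norm_nonneg _) hfnn
    · rw [norm_mul]
      exact mul_le_mul (by rw [← dist_eq_norm]; exact hf.dist_le_mul x y) (hMg y)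
        (norm_nonneg _) (mul_nonneg Lf.2 dist_nonneg)
  refine h2.trans ?_
  have h3 : (Mf * Lg + Lf * Mg : ℝ) ≤ ((Mf * Lg + Lf * Mg).toNNReal : ℝ) :=
    Real.le_coe_toNNReal _
  have h4 : (0:ℝ) ≤ dist x y := dist_nonneg
  nlinarith

theorem alg_aux (h d V e : ℝ) (hh : h ≠ 0) (U P Q : ℂ) :
    ‖(h : ℂ) * ((e * (d / h) : ℝ) * U + (e : ℝ) * P)‖ ^ 2
      + (V - d ^ 2) * (e * e) * ‖U‖ ^ 2
    = ((-(h : ℂ) ^ 2 * Q + (V : ℝ) * U) * ((e * e : ℝ) : ℂ) * (starRingEnd ℂ) U).re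
      + h ^ 2 * (((e * e) * (2 * d / h) : ℝ) * (P * (starRingEnd ℂ) U)
          + ((e * e : ℝ) : ℂ) * (Q * (starRingEnd ℂ) U + P * (starRingEnd ℂ) P)).re := by
  obtain ⟨U1, U2⟩ := U
  obtain ⟨P1, P2⟩ := P
  obtain ⟨Q1, Q2⟩ := Q
  simp only [Complex.sq_norm]
  simp only [Complex.normSq_apply, Complex.add_re, Complex.add_im, Complex.mul_re,
    Complex.mul_im, Complex.ofReal_re, Complex.ofReal_im, Complex.neg_re, Complex.neg_im,
    Complex.conj_re, Complex.conj_im, pow_two]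
  field_simp
  ring

/-- Weighted energy identity (key step of the Agmon estimates, Proposition 2.3):
for `u ∈ C²([a,b];ℂ)` vanishing at the endpoints and `Φ` Lipschitz,
`∫ |h (e^{Φ/h}u)'|² + ∫ (V − (Φ')²) e^{2Φ/h} |u|² = Re ∫ (−h²u'' + Vu) e^{2Φ/h} conj(u)`. -/
theorem stmt_6 (a b : ℝ) (hab : a < b) (V : ℝ → ℝ) (Φ : ℝ → ℝ)
    (hV : ContinuousOn V (Set.Icc a b))
    (K : NNReal) (hΦ : LipschitzOnWith K Φ (Set.Icc a b))
    (h : ℝ) (hh : 0 < h) (u : ℝ → ℂ)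
    (hu : ContDiffOn ℝ 2 u (Set.Icc a b))
    (hua : u a = 0) (hub : u b = 0) :
    (∫ s in a..b, ‖(h : ℂ) * deriv (fun t => (Real.exp (Φ t / h) : ℂ) * u t) s‖ ^ 2)
      + (∫ s in a..b, (V s - (deriv Φ s) ^ 2) * Real.exp (2 * Φ s / h) * ‖u s‖ ^ 2)
    = (∫ s in a..b, (-(h : ℂ) ^ 2 * deriv (deriv u) s + (V s : ℂ) * u s)
        * (Real.exp (2 * Φ s / h) : ℂ) * (starRingEnd ℂ) (u s)).re := by
  
  have hh' : h ≠ 0 := ne_of_gt hh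
  -- projection onto [a,b]
  set pr : ℝ → ℝ := fun x => max a (min x b) with hprdef
  have hpr1 : LipschitzWith 1 pr := by
    have h1 : LipschitzWith 1 (fun x : ℝ => min x b) := LipschitzWith.id.min_const b
    have h2 := h1.max_const a
    simpa [hprdef, max_comm] using h2
  have hpr_mem : ∀ x, pr x ∈ Set.Icc a b :=
    fun x => ⟨le_max_left _ _, max_le hab.le (min_le_right _ _)⟩
  have hpr_id : ∀ x ∈ Set.Icc a b, pr x = x := fun x hx => by
    simp [hprdef, min_eq_left hx.2, max_eq_right hx.1]
  -- Lipschitz extension of Φ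
  set Ψ : ℝ → ℝ := fun x => Φ (pr x) with hΨdef
  have hΨlip : LipschitzWith K Ψ := by
    have h1 : LipschitzOnWith (K * 1) (Φ ∘ pr) Set.univ :=
      hΦ.comp (hpr1.lipschitzOnWith) (fun x _ => hpr_mem x)
    rw [lipschitzOnWith_univ, mul_one] at h1
    exact h1
  -- derivatives of u
  have hI : UniqueDiffOn ℝ (Set.Icc a b) := uniqueDiffOn_Icc hab
  set p := derivWithin u (Set.Icc a b) with hpdef
  set q := derivWithin p (Set.Icc a b) with hqdef
  have hu1 : ContDiffOn ℝ 1 p (Set.Icc a b) := hu.derivWithin hI (by norm_num)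
  have hpc : ContinuousOn p (Set.Icc a b) := hu1.continuousOn
  have hqc : ContinuousOn q (Set.Icc a b) := by
    have : ContDiffOn ℝ 0 q (Set.Icc a b) := hu1.derivWithin hI (by norm_num)
    exact this.continuousOn
  have hmem : ∀ s ∈ Set.Ioo a b, Set.Icc a b ∈ nhds s := fun s hs => Icc_mem_nhds hs.1 hs.2
  have hup : ∀ s ∈ Set.Ioo a b, HasDerivAt u (p s) s := fun s hs =>
    ((hu.differentiableOn two_ne_zero s (Set.Ioo_subset_Icc_self hs)).hasDerivWithinAt).hasDerivAt
      (hmem s hs)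
  have hpq : ∀ s ∈ Set.Ioo a b, HasDerivAt p (q s) s := fun s hs =>
    ((hu1.differentiableOn one_ne_zero s (Set.Ioo_subset_Icc_self hs)).hasDerivWithinAt).hasDerivAt
      (hmem s hs)
  have hddu : ∀ s ∈ Set.Ioo a b, deriv (deriv u) s = q s := fun s hs => by
    have h1 : deriv u =ᶠ[nhds s] p :=
      Filter.eventuallyEq_of_mem (isOpen_Ioo.mem_nhds hs) (fun x hx => (hup x hx).deriv)
    rw [h1.deriv_eq, (hpq s hs).deriv]
  -- bounds
  obtain ⟨MΦ, hMΦ⟩ := isCompact_Icc.exists_bound_of_continuousOn hΦ.continuousOn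
  obtain ⟨Mu, hMu⟩ := isCompact_Icc.exists_bound_of_continuousOn hu.continuousOn
  obtain ⟨Mp, hMp⟩ := isCompact_Icc.exists_bound_of_continuousOn hpc
  obtain ⟨Mq, hMq⟩ := isCompact_Icc.exists_bound_of_continuousOn hqc
  obtain ⟨MV, hMV⟩ := isCompact_Icc.exists_bound_of_continuousOn hV
  have haI : a ∈ Set.Icc a b := ⟨le_rfl, hab.le⟩
  have hbI : b ∈ Set.Icc a b := ⟨hab.le, le_rfl⟩
  have hMΦ0 : 0 ≤ MΦ := (norm_nonneg _).trans (hMΦ a haI)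
  have hMu0 : 0 ≤ Mu := (norm_nonneg _).trans (hMu a haI)
  have hMp0 : 0 ≤ Mp := (norm_nonneg _).trans (hMp a haI)
  have hMV0 : 0 ≤ MV := (norm_nonneg _).trans (hMV a haI)
  have hΨbd : ∀ x, |Ψ x| ≤ MΦ := fun x => by
    simpa [Real.norm_eq_abs] using hMΦ (pr x) (hpr_mem x)
  -- Lipschitz of exp-factors
  have hexp_lip : ∀ c : ℝ, ∃ L : NNReal,
      LipschitzWith L (fun x => ((Real.exp (c * Ψ x / h) : ℝ) : ℂ)) := by
    intro c
    have hEcd : ∀ r : ℝ, HasDerivAt (fun r => Real.exp (c * r / h))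
        (Real.exp (c * r / h) * (c / h)) r := fun r => by
      simpa using (((hasDerivAt_id r).const_mul c).div_const h).exp
    have hlipEc : LipschitzOnWith (Real.exp (|c| * MΦ / h) * (|c| / h)).toNNReal
        (fun r => Real.exp (c * r / h)) (Set.Icc (-MΦ) MΦ) := by
      apply (convex_Icc _ _).lipschitzOnWith_of_nnnorm_deriv_le
        (fun r _ => (hEcd r).differentiableAt)
      intro r hr
      rw [← NNReal.coe_le_coe, coe_nnnorm]
      refine le_trans ?_ (Real.le_coe_toNNReal _)
      rw [(hEcd r).deriv, Real.norm_eq_abs, abs_mul]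
      apply mul_le_mul ?_ ?_ (abs_nonneg _) (Real.exp_pos _).le
      · rw [abs_of_pos (Real.exp_pos _)]
        apply Real.exp_le_exp.2
        apply div_le_div_of_nonneg_right ?_ hh.le
        calc c * r ≤ |c * r| := le_abs_self _
          _ = |c| * |r| := abs_mul _ _
          _ ≤ |c| * MΦ := mul_le_mul_of_nonneg_left (abs_le.2 ⟨hr.1, hr.2⟩) (abs_nonneg c)
      · rw [abs_div, abs_of_pos hh]
    have hmapsto : Set.MapsTo Ψ Set.univ (Set.Icc (-MΦ) MΦ) := fun x _ => by
      have := abs_le.1 (hΨbd x); exact ⟨this.1, this.2⟩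
    have h2 : LipschitzOnWith ((Real.exp (|c| * MΦ / h) * (|c| / h)).toNNReal * K)
        ((fun r => Real.exp (c * r / h)) ∘ Ψ) Set.univ :=
      hlipEc.comp hΨlip.lipschitzOnWith hmapsto
    rw [lipschitzOnWith_univ] at h2
    exact ⟨1 * ((Real.exp (|c| * MΦ / h) * (|c| / h)).toNNReal * K),
      Complex.isometry_ofReal.lipschitz.comp h2⟩
  have hexp_bd : ∀ c : ℝ, ∀ x, ‖((Real.exp (c * Ψ x / h) : ℝ) : ℂ)‖ ≤ Real.exp (|c| * MΦ / h) := by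
    intro c x
    rw [Complex.norm_real, Real.norm_eq_abs, abs_of_pos (Real.exp_pos _)]
    apply Real.exp_le_exp.2
    apply div_le_div_of_nonneg_right ?_ hh.le |>.trans le_rfl
    exact le_trans (le_abs_self _) (by rw [abs_mul]; exact mul_le_mul_of_nonneg_left (hΨbd x) (abs_nonneg c))
  -- Lipschitz of u∘pr, p∘pr on all of ℝ
  have hcomp_lip : ∀ (g : ℝ → ℂ) (Lg : NNReal), LipschitzOnWith Lg g (Set.Icc a b) →
      ∃ L : NNReal, LipschitzWith L (fun x => g (pr x)) := by
    intro g Lg hg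
    refine ⟨Lg * 1, ?_⟩
    have h1 : LipschitzOnWith (Lg * 1) (g ∘ pr) Set.univ :=
      hg.comp (hpr1.lipschitzOnWith) (fun x _ => hpr_mem x)
    rw [lipschitzOnWith_univ] at h1
    exact h1
  have hu_lip : LipschitzOnWith Mp.toNNReal u (Set.Icc a b) := by
    apply (convex_Icc a b).lipschitzOnWith_of_nnnorm_derivWithin_le
      (hu.differentiableOn two_ne_zero)
    intro x hx
    rw [← NNReal.coe_le_coe, coe_nnnorm]
    exact (hMp x hx).trans (Real.le_coe_toNNReal _)
  have hp_lip : LipschitzOnWith Mq.toNNReal p (Set.Icc a b) := by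
    apply (convex_Icc a b).lipschitzOnWith_of_nnnorm_derivWithin_le
      (hu1.differentiableOn one_ne_zero)
    intro x hx
    rw [← NNReal.coe_le_coe, coe_nnnorm]
    exact (hMq x hx).trans (Real.le_coe_toNNReal _)
  have hconj_lip : ∀ (g : ℝ → ℂ), (∃ L : NNReal, LipschitzWith L g) →
      ∃ L : NNReal, LipschitzWith L (fun x => (starRingEnd ℂ) (g x)) := by
    rintro g ⟨Lg, hg⟩
    exact ⟨Lg, fun x y => by
      simpa [edist_eq_enorm_sub, ← map_sub] using hg x y⟩
  -- the two key Lipschitz auxiliary functions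
  set vtil : ℝ → ℂ := fun x => ((Real.exp (1 * Ψ x / h) : ℝ) : ℂ) * u (pr x) with hvtildef
  set F : ℝ → ℂ := fun x => ((Real.exp (2 * Ψ x / h) : ℝ) : ℂ)
      * (p (pr x) * (starRingEnd ℂ) (u (pr x))) with hFdef
  have hUc : Continuous (fun x => u (pr x)) :=
    hu.continuousOn.comp_continuous hpr1.continuous hpr_mem
  have hPc : Continuous (fun x => p (pr x)) := hpc.comp_continuous hpr1.continuous hpr_mem
  have hQc : Continuous (fun x => q (pr x)) := hqc.comp_continuous hpr1.continuous hpr_mem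
  have hVc : Continuous (fun x => V (pr x)) := hV.comp_continuous hpr1.continuous hpr_mem
  have hUbd : ∀ x, ‖u (pr x)‖ ≤ Mu := fun x => hMu (pr x) (hpr_mem x)
  have hPbd : ∀ x, ‖p (pr x)‖ ≤ Mp := fun x => hMp (pr x) (hpr_mem x)
  obtain ⟨Lv, hLv⟩ : ∃ L : NNReal, LipschitzWith L vtil := by
    apply lip_mul_aux (hexp_lip 1) (hcomp_lip u Mp.toNNReal hu_lip)
    · exact ⟨_, hexp_bd 1⟩
    · exact ⟨Mu, hUbd⟩
  obtain ⟨LF, hLF⟩ : ∃ L : NNReal, LipschitzWith L F := by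
    apply lip_mul_aux (hexp_lip 2)
    · apply lip_mul_aux (hcomp_lip p Mq.toNNReal hp_lip)
        (hconj_lip _ (hcomp_lip u Mp.toNNReal hu_lip))
      · exact ⟨Mp, hPbd⟩
      · exact ⟨Mu, fun x => by simpa using hUbd x⟩
    · exact ⟨_, hexp_bd 2⟩
    · exact ⟨Mp * Mu, fun x => by
        rw [norm_mul]
        exact mul_le_mul (hPbd x) (by simpa using hUbd x) (norm_nonneg _) hMp0⟩
  -- FTC for F
  have hFa : F a = 0 := by simp [hFdef, hpr_id a haI, hua]
  have hFb : F b = 0 := by simp [hFdef, hpr_id b hbI, hub]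
  have hFTC : (∫ x in a..b, deriv F x) = 0 := by
    rw [lipschitz_integral_deriv hLF hab.le, hFa, hFb, sub_zero]
  -- a.e. facts
  have hb_ae : ∀ᵐ s : ℝ, s ≠ b := by
    rw [MeasureTheory.ae_iff]
    convert Real.volume_singleton (a := b) using 2
    ext x; simp
  have hmem_ae : ∀ᵐ s ∂(volume.restrict (Set.Ioc a b)), s ∈ Set.Ioo a b := by
    filter_upwards [MeasureTheory.ae_restrict_mem measurableSet_Ioc,
      MeasureTheory.ae_restrict_of_ae hb_ae] with s h1 h2
    exact ⟨h1.1, lt_of_le_of_ne h1.2 h2⟩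
  have hdiff_ae : ∀ᵐ s ∂(volume.restrict (Set.Ioc a b)), DifferentiableAt ℝ Ψ s :=
    MeasureTheory.ae_restrict_of_ae hΨlip.ae_differentiableAt
  -- local agreement of Φ with Ψ, etc.
  have hΦΨ : ∀ s ∈ Set.Ioo a b, Φ =ᶠ[nhds s] Ψ := fun s hs =>
    Filter.eventuallyEq_of_mem (isOpen_Ioo.mem_nhds hs)
      (fun x hx => by simp [hΨdef, hpr_id x (Set.Ioo_subset_Icc_self hx)])
  have hderivΦΨ : ∀ s ∈ Set.Ioo a b, deriv Φ s = deriv Ψ s := fun s hs => (hΦΨ s hs).deriv_eq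
  -- pointwise derivative computations on Ioo (at points of differentiability of Ψ)
  have hvt : ∀ s ∈ Set.Ioo a b, DifferentiableAt ℝ Ψ s →
      deriv (fun t => (Real.exp (Φ t / h) : ℂ) * u t) s
        = (Real.exp (Φ s / h) * (deriv Ψ s / h) : ℝ) * u s + (Real.exp (Φ s / h) : ℝ) * p s := by
    intro s hs hd
    have hdΦ : HasDerivAt Φ (deriv Ψ s) s :=
      (hd.hasDerivAt).congr_of_eventuallyEq (hΦΨ s hs)
    have hexpC : HasDerivAt (fun t => ((Real.exp (Φ t / h) : ℝ) : ℂ))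
        ((Real.exp (Φ s / h) * (deriv Ψ s / h) : ℝ)) s := ((hdΦ.div_const h).exp).ofReal_comp
    exact (hexpC.mul (hup s hs)).deriv
  have hFderiv : ∀ s ∈ Set.Ioo a b, DifferentiableAt ℝ Ψ s →
      deriv F s = (Real.exp (2 * Φ s / h) * (2 * deriv Ψ s / h) : ℝ)
          * (p s * (starRingEnd ℂ) (u s))
        + (Real.exp (2 * Φ s / h) : ℝ)
          * (q s * (starRingEnd ℂ) (u s) + p s * (starRingEnd ℂ) (p s)) := by
    intro s hs hd
    have hdΦ : HasDerivAt Φ (deriv Ψ s) s :=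
      (hd.hasDerivAt).congr_of_eventuallyEq (hΦΨ s hs)
    have hexpC : HasDerivAt (fun t => ((Real.exp (2 * Φ t / h) : ℝ) : ℂ))
        ((Real.exp (2 * Φ s / h) * (2 * deriv Ψ s / h) : ℝ)) s :=
      (((hdΦ.const_mul 2).div_const h).exp).ofReal_comp
    have hconj : HasDerivAt (fun x => (starRingEnd ℂ) (u x)) ((starRingEnd ℂ) (p s)) s := by
      simpa [Complex.star_def] using (hup s hs).star
    have hG : HasDerivAt (fun x => ((Real.exp (2 * Φ x / h) : ℝ) : ℂ)
        * (p x * (starRingEnd ℂ) (u x)))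
        ((Real.exp (2 * Φ s / h) * (2 * deriv Ψ s / h) : ℝ) * (p s * (starRingEnd ℂ) (u s))
          + (Real.exp (2 * Φ s / h) : ℝ)
            * (q s * (starRingEnd ℂ) (u s) + p s * (starRingEnd ℂ) (p s))) s :=
      hexpC.mul ((hpq s hs).mul hconj)
    have hFG : F =ᶠ[nhds s] fun x => ((Real.exp (2 * Φ x / h) : ℝ) : ℂ)
        * (p x * (starRingEnd ℂ) (u x)) :=
      Filter.eventuallyEq_of_mem (isOpen_Ioo.mem_nhds hs)
        (fun x hx => by simp [hFdef, hΨdef, hpr_id x (Set.Ioo_subset_Icc_self hx)])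
    rw [hFG.deriv_eq, hG.deriv]
  -- the g-versions of the integrands
  set g1 : ℝ → ℝ := fun s => ‖(h : ℂ) * deriv vtil s‖ ^ 2 with hg1def
  set g2 : ℝ → ℝ := fun s => (V (pr s) - (deriv Ψ s) ^ 2) * Real.exp (2 * Ψ s / h)
      * ‖u (pr s)‖ ^ 2 with hg2def
  set g3 : ℝ → ℂ := fun s => (-(h : ℂ) ^ 2 * (q (pr s)) + (V (pr s) : ℂ) * u (pr s))
      * ((Real.exp (2 * Ψ s / h) : ℝ) : ℂ) * (starRingEnd ℂ) (u (pr s)) with hg3def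
  have eΨ : ∀ s ∈ Set.Ioo a b, Ψ s = Φ s := fun s hs => by
    show Φ (pr s) = Φ s
    rw [hpr_id s (Set.Ioo_subset_Icc_self hs)]
  -- pointwise equality of integrands on Ioo
  have hvev : ∀ s ∈ Set.Ioo a b,
      vtil =ᶠ[nhds s] (fun t => (Real.exp (Φ t / h) : ℂ) * u t) := fun s hs =>
    Filter.eventuallyEq_of_mem (isOpen_Ioo.mem_nhds hs) (fun x hx => by
      have hxI := Set.Ioo_subset_Icc_self hx
      simp [hvtildef, eΨ x hx, hpr_id x hxI])
  have heq1 : ∀ s ∈ Set.Ioo a b,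
      ‖(h : ℂ) * deriv (fun t => (Real.exp (Φ t / h) : ℂ) * u t) s‖ ^ 2 = g1 s := fun s hs => by
    simp only [hg1def]
    rw [(hvev s hs).deriv_eq]
  have heq2 : ∀ s ∈ Set.Ioo a b,
      (V s - (deriv Φ s) ^ 2) * Real.exp (2 * Φ s / h) * ‖u s‖ ^ 2 = g2 s := fun s hs => by
    rw [hg2def]
    simp only [hpr_id s (Set.Ioo_subset_Icc_self hs), eΨ s hs, hderivΦΨ s hs]
  have heq3 : ∀ s ∈ Set.Ioo a b,
      (-(h : ℂ) ^ 2 * deriv (deriv u) s + (V s : ℂ) * u s)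
        * (Real.exp (2 * Φ s / h) : ℂ) * (starRingEnd ℂ) (u s) = g3 s := fun s hs => by
    rw [hg3def]
    simp only [hpr_id s (Set.Ioo_subset_Icc_self hs), eΨ s hs, hddu s hs]
  -- integrability
  have hg1m : AEStronglyMeasurable g1 (volume.restrict (Set.Ioc a b)) :=
    (((measurable_deriv vtil).const_mul ((h : ℂ))).norm.pow_const 2).aestronglyMeasurable
  have hnormh : ‖(h : ℂ)‖ = h := by
    rw [Complex.norm_real, Real.norm_eq_abs, abs_of_pos hh]
  have hg1i : Integrable g1 (volume.restrict (Set.Ioc a b)) := by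
    refine Integrable.mono' (integrable_const ((h * Lv) ^ 2)) hg1m
      (Filter.Eventually.of_forall fun s => ?_)
    rw [hg1def]
    simp only
    rw [Real.norm_eq_abs, abs_of_nonneg (by positivity), norm_mul, hnormh]
    exact pow_le_pow_left₀ (by positivity)
      (mul_le_mul_of_nonneg_left (norm_deriv_le_of_lipschitz hLv) hh.le) 2
  have hΨc : Continuous Ψ := hΨlip.continuous
  have hexp2c : Continuous fun s => Real.exp (2 * Ψ s / h) :=
    Real.continuous_exp.comp ((continuous_const.mul hΨc).div_const h)
  have hg2m : AEStronglyMeasurable g2 (volume.restrict (Set.Ioc a b)) :=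
    (((hVc.measurable.sub ((measurable_deriv Ψ).pow_const 2)).mul hexp2c.measurable).mul
      ((hUc.norm.pow 2).measurable)).aestronglyMeasurable
  have hdΨbd : ∀ s : ℝ, |deriv Ψ s| ≤ (K : ℝ) := fun s => by
    simpa [Real.norm_eq_abs] using norm_deriv_le_of_lipschitz (x₀ := s) hΨlip
  have hg2i : Integrable g2 (volume.restrict (Set.Ioc a b)) := by
    refine Integrable.mono' (integrable_const ((MV + (K : ℝ) ^ 2) * Real.exp (2 * MΦ / h)
      * Mu ^ 2)) hg2m (Filter.Eventually.of_forall fun s => ?_)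
    rw [hg2def]
    simp only
    rw [Real.norm_eq_abs, abs_mul, abs_mul]
    have e1 : |V (pr s) - (deriv Ψ s) ^ 2| ≤ MV + (K : ℝ) ^ 2 := by
      refine (abs_sub _ _).trans (add_le_add ?_ ?_)
      · simpa [Real.norm_eq_abs] using hMV (pr s) (hpr_mem s)
      · rw [abs_pow]
        exact pow_le_pow_left₀ (abs_nonneg _) (hdΨbd s) 2
    have e2 : |Real.exp (2 * Ψ s / h)| ≤ Real.exp (2 * MΦ / h) := by
      rw [abs_of_pos (Real.exp_pos _)]
      refine Real.exp_le_exp.2 (div_le_div_of_nonneg_right ?_ hh.le)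
      nlinarith [hΨbd s, abs_le.1 (hΨbd s)]
    have e3 : |‖u (pr s)‖ ^ 2| ≤ Mu ^ 2 := by
      rw [abs_of_nonneg (by positivity)]
      exact pow_le_pow_left₀ (norm_nonneg _) (hUbd s) 2
    have hK2 : (0:ℝ) ≤ MV + (K : ℝ) ^ 2 := add_nonneg hMV0 (by positivity)
    exact mul_le_mul (mul_le_mul e1 e2 (abs_nonneg _) hK2) e3 (abs_nonneg _)
      (mul_nonneg hK2 (Real.exp_pos _).le)
  have hg3c : Continuous g3 := by
    refine Continuous.mul (Continuous.mul ?_ ?_) ?_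
    · exact (continuous_const.mul hQc).add ((Complex.continuous_ofReal.comp hVc).mul hUc)
    · exact Complex.continuous_ofReal.comp hexp2c
    · exact Complex.continuous_conj.comp hUc
  have hg3i : Integrable g3 (volume.restrict (Set.Ioc a b)) := hg3c.integrableOn_Ioc
  have hDFi : Integrable (deriv F) (volume.restrict (Set.Ioc a b)) :=
    Integrable.mono' (integrable_const (LF : ℝ)) (measurable_deriv F).aestronglyMeasurable
      (Filter.Eventually.of_forall fun s => norm_deriv_le_of_lipschitz hLF)
  -- key pointwise identity
  have hkey : ∀ᵐ s ∂(volume.restrict (Set.Ioc a b)),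
      g1 s + g2 s = (g3 s).re + h ^ 2 * (deriv F s).re := by
    filter_upwards [hmem_ae, hdiff_ae] with s hs hd
    have e0 : pr s = s := hpr_id s (Set.Ioo_subset_Icc_self hs)
    have hdv : deriv vtil s
        = (Real.exp (Φ s / h) * (deriv Ψ s / h) : ℝ) * u s + (Real.exp (Φ s / h) : ℝ) * p s := by
      rw [(hvev s hs).deriv_eq, hvt s hs hd]
    rw [hg1def, hg2def, hg3def]
    simp only
    rw [hdv, hFderiv s hs hd, e0, eΨ s hs]
    rw [show Real.exp (2 * Φ s / h) = Real.exp (Φ s / h) * Real.exp (Φ s / h) by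
      rw [← Real.exp_add]; congr 1; ring]
    exact alg_aux h (deriv Ψ s) (V s) (Real.exp (Φ s / h)) hh' (u s) (p s) (q s)
  -- assemble
  rw [intervalIntegral.integral_of_le hab.le, intervalIntegral.integral_of_le hab.le,
    intervalIntegral.integral_of_le hab.le]
  have hI1 : (∫ s in Set.Ioc a b, ‖(h : ℂ)
        * deriv (fun t => (Real.exp (Φ t / h) : ℂ) * u t) s‖ ^ 2)
      = ∫ s in Set.Ioc a b, g1 s :=
    MeasureTheory.integral_congr_ae (hmem_ae.mono fun s hs => heq1 s hs)
  have hI2 : (∫ s in Set.Ioc a b, (V s - (deriv Φ s) ^ 2) * Real.exp (2 * Φ s / h) * ‖u s‖ ^ 2)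
      = ∫ s in Set.Ioc a b, g2 s :=
    MeasureTheory.integral_congr_ae (hmem_ae.mono fun s hs => heq2 s hs)
  have hI3 : (∫ s in Set.Ioc a b, (-(h : ℂ) ^ 2 * deriv (deriv u) s + (V s : ℂ) * u s)
        * (Real.exp (2 * Φ s / h) : ℂ) * (starRingEnd ℂ) (u s))
      = ∫ s in Set.Ioc a b, g3 s :=
    MeasureTheory.integral_congr_ae (hmem_ae.mono fun s hs => heq3 s hs)
  rw [hI1, hI2, hI3]
  have hre : (∫ s in Set.Ioc a b, g3 s).re = ∫ s in Set.Ioc a b, (g3 s).re := by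
    have h7 := integral_re (μ := volume.restrict (Set.Ioc a b)) hg3i
    simpa using h7.symm
  rw [hre, ← MeasureTheory.integral_add hg1i hg2i, MeasureTheory.integral_congr_ae hkey]
  have hg3rei : Integrable (fun s => (g3 s).re) (volume.restrict (Set.Ioc a b)) :=
    (Complex.continuous_re.comp hg3c).integrableOn_Ioc
  have hDFrei : Integrable (fun s => h ^ 2 * (deriv F s).re) (volume.restrict (Set.Ioc a b)) :=
    hDFi.re.const_mul _
  rw [MeasureTheory.integral_add hg3rei hDFrei]
  have hz : (∫ s in Set.Ioc a b, h ^ 2 * (deriv F s).re) = 0 := by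
    rw [MeasureTheory.integral_const_mul]
    have h9 : (∫ s in Set.Ioc a b, (deriv F s).re) = 0 := by
      have h10 := integral_re (μ := volume.restrict (Set.Ioc a b)) hDFi
      have h11 : (∫ s in Set.Ioc a b, deriv F s) = 0 := by
        rw [← intervalIntegral.integral_of_le hab.le]
        exact hFTC
      have h12 : (∫ s in Set.Ioc a b, (deriv F s).re)
          = (∫ s in Set.Ioc a b, deriv F s).re := by simpa using h10
      rw [h12, h11, Complex.zero_re]
    rw [h9, mul_zero]
  rw [hz, add_zero]
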